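/- Let X, V, W, Y be real Banach spaces, L : X → W and C : V → Y continuous linear maps, Â : V → W a map, and S : X → V a map satisfying Â(S x') + L x' = 0 for every x' ∈ X. Let x, x̃ ∈ X, assume S is Fréchet differentiable at x and at x̃, and assume Â is Fréchet differentiable at S x and at S x̃ with derivatives G := Â'(S x) and G̃ := Â'(S x̃) that are continuous linear isomorphisms from V onto W. Assume furthermore that C admits a continuous linear left inverse C† : Y → V with C† ∘ C = Id_V (corresponding to injectivity of C). Then the reduced forward operator F := C ∘ S is Fréchet differentiable at x and x̃ with F'(x) = −C ∘ G⁻¹ ∘ L and F'(x̃) = −C ∘ G̃⁻¹ ∘ L, and the reduced adjoint range invariance condition F'(x̃) = R ∘ F'(x) holds with R := C ∘ G̃⁻¹ ∘ G ∘ C†. -/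

import Mathlib

lemma state_deriv_aux
    {X V W : Type*}
    [NormedAddCommGroup X] [NormedSpace ℝ X]
    [NormedAddCommGroup V] [NormedSpace ℝ V]
    [NormedAddCommGroup W] [NormedSpace ℝ W]
    (L : X →L[ℝ] W) (Ahat : V → W) (S : X → V)
    (hmodel : ∀ x' : X, Ahat (S x') + L x' = 0)
    (x : X) (hSx : DifferentiableAt ℝ S x)
    (G : V ≃L[ℝ] W)
    (hG : HasFDerivAt Ahat (G : V →L[ℝ] W) (S x)) :
    HasFDerivAt S (-((G.symm : W →L[ℝ] V).comp L)) x := by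
  have hD := hSx.hasFDerivAt
  have hcomp : HasFDerivAt (fun x' => Ahat (S x'))
      ((G : V →L[ℝ] W).comp (fderiv ℝ S x)) x := hG.comp x hD
  have hfun : (fun x' => Ahat (S x')) = fun x' => -(L x') := by
    funext x'
    exact eq_neg_of_add_eq_zero_left (hmodel x')
  rw [hfun] at hcomp
  have hneg : HasFDerivAt (fun x' : X => -(L x')) (-L : X →L[ℝ] W) x :=
    (L.hasFDerivAt).neg
  have huniq : (G : V →L[ℝ] W).comp (fderiv ℝ S x) = -L :=
    hcomp.unique hneg
  have hfd : fderiv ℝ S x = -((G.symm : W →L[ℝ] V).comp L) := by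
    ext v
    have := congrArg (fun (T : X →L[ℝ] W) => G.symm (T v)) huniq
    simpa using this
  rw [← hfd]
  exact hD

theorem reduced_adjoint_range_invariance
    {X V W Y : Type*}
    [NormedAddCommGroup X] [NormedSpace ℝ X] [CompleteSpace X]
    [NormedAddCommGroup V] [NormedSpace ℝ V] [CompleteSpace V]
    [NormedAddCommGroup W] [NormedSpace ℝ W] [CompleteSpace W]
    [NormedAddCommGroup Y] [NormedSpace ℝ Y] [CompleteSpace Y]
    (L : X →L[ℝ] W) (C : V →L[ℝ] Y) (Ahat : V → W) (S : X → V)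
    (hmodel : ∀ x' : X, Ahat (S x') + L x' = 0)
    (x xtilde : X)
    (hSx : DifferentiableAt ℝ S x) (hSxtilde : DifferentiableAt ℝ S xtilde)
    (G Gtilde : V ≃L[ℝ] W)
    (hG : HasFDerivAt Ahat (G : V →L[ℝ] W) (S x))
    (hGtilde : HasFDerivAt Ahat (Gtilde : V →L[ℝ] W) (S xtilde))
    (Cdag : Y →L[ℝ] V) (hCdag : Cdag.comp C = ContinuousLinearMap.id ℝ V)
    (R : Y →L[ℝ] Y)
    (hR : R = C.comp (((Gtilde.symm : W →L[ℝ] V)).comp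
            (((G : V →L[ℝ] W)).comp Cdag))) :
    HasFDerivAt (fun x' => C (S x'))
      (-(C.comp ((G.symm : W →L[ℝ] V).comp L))) x ∧
    HasFDerivAt (fun x' => C (S x'))
      (-(C.comp ((Gtilde.symm : W →L[ℝ] V).comp L))) xtilde ∧
    -(C.comp ((Gtilde.symm : W →L[ℝ] V).comp L)) =
      R.comp (-(C.comp ((G.symm : W →L[ℝ] V).comp L))) := by
  have h1 := state_deriv_aux L Ahat S hmodel x hSx G hG
  have h2 := state_deriv_aux L Ahat S hmodel xtilde hSxtilde Gtilde hGtilde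
  have hC1 : HasFDerivAt (fun x' => C (S x'))
      (-(C.comp ((G.symm : W →L[ℝ] V).comp L))) x := by
    have := (C.hasFDerivAt).comp x h1
    simpa [ContinuousLinearMap.comp_neg, Function.comp_def] using this
  have hC2 : HasFDerivAt (fun x' => C (S x'))
      (-(C.comp ((Gtilde.symm : W →L[ℝ] V).comp L))) xtilde := by
    have := (C.hasFDerivAt).comp xtilde h2
    simpa [ContinuousLinearMap.comp_neg, Function.comp_def] using this
  refine ⟨hC1, hC2, ?_⟩
  subst hR
  have hC : ∀ v' : V, Cdag (C v') = v' := fun v' => by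
    have := congrArg (fun T : V →L[ℝ] V => T v') hCdag
    simpa using this
  ext v
  simp [hC]
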